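/- For every integer d ≥ 2 and every real a > 0, the integral ∫₀^∞ sinh^{d−1}(r) · exp( −a ∫₀^{r/2} ( cosh²(r)/cosh²(r−t) − 1 )^{(d−1)/2} dt ) dr is finite. -/

import Mathlib

open MeasureTheory Real

section Aux

/-- The inner integrand. -/
private noncomputable def stmt0g (d : ℕ) (r t : ℝ) : ℝ :=
  ((Real.cosh r) ^ 2 / (Real.cosh (r - t)) ^ 2 - 1) ^ (((d : ℝ) - 1) / 2)

private lemma stmt0g_cont (d : ℕ) (hd : 2 ≤ d) :
    Continuous (Function.uncurry (stmt0g d)) := by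
  have hp : (0 : ℝ) ≤ ((d : ℝ) - 1) / 2 := by
    have : (2 : ℝ) ≤ (d : ℝ) := by exact_mod_cast hd
    linarith
  have h1 : Continuous fun x : ℝ => x ^ (((d : ℝ) - 1) / 2) :=
    continuous_iff_continuousAt.2 fun x =>
      Real.continuousAt_rpow_const x _ (Or.inr hp)
  apply h1.comp
  have h2 : Continuous fun q : ℝ × ℝ => Real.cosh (q.1 - q.2) :=
    Real.continuous_cosh.comp (continuous_fst.sub continuous_snd)
  exact (((Real.continuous_cosh.comp continuous_fst).pow 2).div (h2.pow 2)
    (fun q => (pow_pos (Real.cosh_pos _) 2).ne')).sub continuous_const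

/-- Pointwise lower bound for the inner integrand on `[2, r/2]`. -/
private lemma stmt0g_lb (d : ℕ) (hd : 2 ≤ d) {r t : ℝ} (ht2 : 2 ≤ t) (htr : t ≤ r / 2) :
    Real.exp t / 3 ≤ stmt0g d r t := by
  have hrt0 : (0 : ℝ) ≤ r - t := by linarith
  have hXpos := Real.exp_pos t
  have hX : (3 : ℝ) ≤ Real.exp t := by
    have := Real.add_one_le_exp t; linarith
  -- cosh (r - t) ≤ exp (r - t)
  have hcosh_le : Real.cosh (r - t) ≤ Real.exp (r - t) := by
    rw [Real.cosh_eq]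
    have h1 : Real.exp (-(r - t)) ≤ Real.exp (r - t) :=
      Real.exp_le_exp.2 (by linarith)
    linarith
  -- exp r / 2 ≤ cosh r
  have hcosh_ge : Real.exp r / 2 ≤ Real.cosh r := by
    rw [Real.cosh_eq]
    have := (Real.exp_pos (-r)).le
    linarith
  have hc1 : (0 : ℝ) < Real.cosh (r - t) := by positivity
  have hc2 : (0 : ℝ) < Real.cosh r := by positivity
  -- base lower bound
  have hbase : (Real.exp r / 2) ^ 2 / (Real.exp (r - t)) ^ 2
      ≤ (Real.cosh r) ^ 2 / (Real.cosh (r - t)) ^ 2 := by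
    apply div_le_div₀ (by positivity)
    · exact pow_le_pow_left₀ (by positivity) hcosh_ge 2
    · positivity
    · exact pow_le_pow_left₀ hc1.le hcosh_le 2
  have hexp_eq : (Real.exp r / 2) ^ 2 / (Real.exp (r - t)) ^ 2
      = (Real.exp t) ^ 2 / 4 := by
    have : Real.exp r = Real.exp t * Real.exp (r - t) := by
      rw [← Real.exp_add]; ring_nf
    rw [this]
    have := (Real.exp_pos (r - t)).ne'
    field_simp
    ring
  set B : ℝ := (Real.cosh r) ^ 2 / (Real.cosh (r - t)) ^ 2 - 1 with hB
  clear_value B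
  have hB2 : (Real.exp t) ^ 2 / 4 - 1 ≤ B := by
    rw [hB]; rw [hexp_eq] at hbase; linarith
  have hsq9 : (9 : ℝ) ≤ (Real.exp t) ^ 2 := by nlinarith [sq_nonneg (Real.exp t - 3)]
  have hB1 : (1 : ℝ) ≤ B := by linarith
  have hBsq : (Real.exp t / 3) ^ 2 ≤ B := by
    have : (Real.exp t / 3) ^ 2 = (Real.exp t) ^ 2 / 9 := by ring
    rw [this]; linarith
  have hsqrt : Real.exp t / 3 ≤ Real.sqrt B :=
    (Real.le_sqrt (by positivity) (by linarith)).2 hBsq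
  have hhalf : Real.sqrt B = B ^ ((1 : ℝ) / 2) := Real.sqrt_eq_rpow B
  have hpe : B ^ ((1 : ℝ) / 2) ≤ B ^ (((d : ℝ) - 1) / 2) := by
    apply Real.rpow_le_rpow_of_exponent_le hB1
    have : (2 : ℝ) ≤ (d : ℝ) := by exact_mod_cast hd
    linarith
  calc Real.exp t / 3 ≤ Real.sqrt B := hsqrt
    _ = B ^ ((1 : ℝ) / 2) := hhalf
    _ ≤ B ^ (((d : ℝ) - 1) / 2) := hpe
    _ = stmt0g d r t := by rw [hB]; rfl

/-- Nonnegativity of the inner integrand for `0 ≤ t ≤ r`. -/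
private lemma stmt0g_nonneg (d : ℕ) {r t : ℝ} (ht0 : 0 ≤ t) (htr : t ≤ r) :
    0 ≤ stmt0g d r t := by
  have h1 : Real.cosh (r - t) ≤ Real.cosh r := by
    rw [Real.cosh_le_cosh]
    rw [abs_of_nonneg (by linarith), abs_of_nonneg (by linarith)]
    linarith
  have hc1 : (0 : ℝ) < Real.cosh (r - t) := by positivity
  have hbase : (0 : ℝ) ≤ (Real.cosh r) ^ 2 / (Real.cosh (r - t)) ^ 2 - 1 := by
    have : (1 : ℝ) ≤ (Real.cosh r) ^ 2 / (Real.cosh (r - t)) ^ 2 := by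
      rw [one_le_div (by positivity)]
      exact pow_le_pow_left₀ hc1.le h1 2
    linarith
  exact Real.rpow_nonneg hbase _

/-- Lower bound for the inner integral. -/
private lemma stmt0F_lb (d : ℕ) (hd : 2 ≤ d) {r : ℝ} (hr : 4 ≤ r) :
    Real.exp (r / 2) / 3 - 3 ≤ ∫ t in (0:ℝ)..(r / 2), stmt0g d r t := by
  have hgr : Continuous (stmt0g d r) :=
    Continuous.uncurry_left r (stmt0g_cont d hd)
  have h02 : IntervalIntegrable (stmt0g d r) volume 0 2 :=
    hgr.intervalIntegrable _ _
  have h2r : IntervalIntegrable (stmt0g d r) volume 2 (r / 2) :=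
    hgr.intervalIntegrable _ _
  have hsplit : ∫ t in (0:ℝ)..(r / 2), stmt0g d r t
      = (∫ t in (0:ℝ)..2, stmt0g d r t) + ∫ t in (2:ℝ)..(r / 2), stmt0g d r t :=
    (intervalIntegral.integral_add_adjacent_intervals h02 h2r).symm
  have h1 : 0 ≤ ∫ t in (0:ℝ)..2, stmt0g d r t := by
    apply intervalIntegral.integral_nonneg (by norm_num)
    intro t ht
    exact stmt0g_nonneg d ht.1 (by rcases ht with ⟨_, ht2⟩; linarith)
  have h2 : (∫ t in (2:ℝ)..(r / 2), Real.exp t / 3)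
      ≤ ∫ t in (2:ℝ)..(r / 2), stmt0g d r t := by
    apply intervalIntegral.integral_mono_on (by linarith)
      ((Real.continuous_exp.div_const 3).intervalIntegrable _ _) h2r
    intro t ht
    exact stmt0g_lb d hd ht.1 ht.2
  have h3 : (∫ t in (2:ℝ)..(r / 2), Real.exp t / 3)
      = (Real.exp (r / 2) - Real.exp 2) / 3 := by
    rw [intervalIntegral.integral_div, integral_exp]
  have h4 : Real.exp 2 ≤ 9 := by
    have h := Real.exp_one_lt_d9
    have h2 : Real.exp 2 = Real.exp 1 * Real.exp 1 := by
      rw [← Real.exp_add]; norm_num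
    nlinarith [Real.exp_pos 1]
  rw [hsplit]
  linarith

end Aux

/-- For every integer `d ≥ 2` and every real `a > 0`, the integral
`∫₀^∞ sinh^{d−1}(r) · exp(−a ∫₀^{r/2} (cosh²(r)/cosh²(r−t) − 1)^{(d−1)/2} dt) dr`
is finite. -/
theorem stmt0 (d : ℕ) (hd : 2 ≤ d) (a : ℝ) (ha : 0 < a) :
    IntegrableOn
      (fun r : ℝ =>
        Real.sinh r ^ (d - 1) *
          Real.exp (-a * ∫ t in (0:ℝ)..(r / 2),
            ((Real.cosh r) ^ 2 / (Real.cosh (r - t)) ^ 2 - 1) ^ (((d : ℝ) - 1) / 2)))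
      (Set.Ioi (0 : ℝ)) := by
  have hd2 : (2 : ℝ) ≤ (d : ℝ) := by exact_mod_cast hd
  have hF : Continuous fun r : ℝ => ∫ t in (0:ℝ)..(r / 2), stmt0g d r t :=
    intervalIntegral.continuous_parametric_intervalIntegral_of_continuous (stmt0g_cont d hd)
      (continuous_id.div_const 2)
  have hcont : Continuous fun r : ℝ =>
      Real.sinh r ^ (d - 1) *
        Real.exp (-a * ∫ t in (0:ℝ)..(r / 2),
          ((Real.cosh r) ^ 2 / (Real.cosh (r - t)) ^ 2 - 1) ^ (((d : ℝ) - 1) / 2)) :=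
    (Real.continuous_sinh.pow _).mul (((continuous_const.mul hF).rexp))
  apply integrable_of_isBigO_exp_neg (b := 1) one_pos hcont.continuousOn
  apply Asymptotics.IsBigO.of_bound 1
  filter_upwards [Filter.eventually_ge_atTop (max 4 (48 * ((d : ℝ) + 3 * a + 3) / a))]
    with r hr
  have hr4 : (4 : ℝ) ≤ r := le_trans (le_max_left _ _) hr
  have hrK : 48 * ((d : ℝ) + 3 * a + 3) / a ≤ r := le_trans (le_max_right _ _) hr
  have hrK' : 48 * ((d : ℝ) + 3 * a + 3) ≤ a * r := by
    rw [div_le_iff₀ ha] at hrK; linarith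
  set F : ℝ := ∫ t in (0:ℝ)..(r / 2), stmt0g d r t with hFdef
  have hFlb : Real.exp (r / 2) / 3 - 3 ≤ F := stmt0F_lb d hd hr4
  -- bound on sinh
  have hsinh0 : 0 ≤ Real.sinh r := Real.sinh_nonneg_iff.2 (by linarith)
  have hsinh_le : Real.sinh r ≤ Real.exp r := by
    rw [Real.sinh_eq]
    have := (Real.exp_pos (-r)).le
    have := (Real.exp_pos r).le
    linarith
  have hpow : Real.sinh r ^ (d - 1) ≤ Real.exp ((↑(d - 1) : ℕ) * r) := by
    rw [Real.exp_nat_mul]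
    exact pow_le_pow_left₀ hsinh0 hsinh_le _
  have hcast : ((d - 1 : ℕ) : ℝ) = (d : ℝ) - 1 := by
    have : 1 ≤ d := le_trans one_le_two hd
    rw [Nat.cast_sub this, Nat.cast_one]
  -- the exponent inequality
  have hquad : r ^ 2 / 16 ≤ Real.exp (r / 2) := by
    have h1 : r / 4 + 1 ≤ Real.exp (r / 4) := Real.add_one_le_exp (r / 4)
    have h2 : Real.exp (r / 2) = Real.exp (r / 4) * Real.exp (r / 4) := by
      rw [← Real.exp_add]; ring_nf
    nlinarith [Real.exp_pos (r / 4)]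
  have hkey : ((d : ℝ) - 1) * r + (-a * (Real.exp (r / 2) / 3 - 3)) ≤ -r := by
    have h1 : a * (r ^ 2 / 16) ≤ a * Real.exp (r / 2) :=
      mul_le_mul_of_nonneg_left hquad ha.le
    nlinarith
  calc ‖Real.sinh r ^ (d - 1) * Real.exp (-a * F)‖
      = Real.sinh r ^ (d - 1) * Real.exp (-a * F) := by
        rw [Real.norm_eq_abs, abs_of_nonneg (by positivity)]
    _ ≤ Real.exp (((d : ℝ) - 1) * r) * Real.exp (-a * (Real.exp (r / 2) / 3 - 3)) := by
        apply mul_le_mul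
        · rw [← hcast]; exact hpow
        · apply Real.exp_le_exp.2
          have : a * (Real.exp (r / 2) / 3 - 3) ≤ a * F :=
            mul_le_mul_of_nonneg_left hFlb ha.le
          linarith
        · exact (Real.exp_pos _).le
        · positivity
    _ = Real.exp (((d : ℝ) - 1) * r + (-a * (Real.exp (r / 2) / 3 - 3))) := by
        rw [← Real.exp_add]
    _ ≤ Real.exp (-r) := Real.exp_le_exp.2 hkey
    _ ≤ 1 * ‖Real.exp (-1 * r)‖ := by
        rw [one_mul, Real.norm_eq_abs, abs_of_pos (Real.exp_pos _), neg_one_mul]
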